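/- Let R = ℤ₄[x]/⟨x²+2, 2x⟩ and 𝓡 = R[X]/⟨X³−1⟩. The element ε₀(X) = 3X² + 3X + 3 is an idempotent in 𝓡, the element ε₁(X) = X² + X + 2 is an idempotent in 𝓡, ε₀(X)·ε₁(X) = 0, and ε₀(X) + ε₁(X) = 1 in 𝓡. -/

import Mathlib

open Polynomial

instance (I : Ideal (ZMod 4)[X]) (J : Ideal ((ZMod 4)[X] ⧸ I)[X]) : J.IsTwoSided :=
  ⟨fun b ha ↦ mul_comm b _ ▸ J.smul_mem b ha⟩

set_option maxHeartbeats 1000000 in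
theorem idempotents_in_RX_mod_X3_sub_1 :
    letI R := (ZMod 4)[X] ⧸ Ideal.span {(X ^ 2 + 2 : (ZMod 4)[X]), (2 * X : (ZMod 4)[X])}
    letI π := Ideal.Quotient.mk (Ideal.span {(X ^ 3 - 1 : R[X])})
    letI ε₀ := π (3 * X ^ 2 + 3 * X + 3)
    letI ε₁ := π (X ^ 2 + X + 2)
    ε₀ * ε₀ = ε₀ ∧ ε₁ * ε₁ = ε₁ ∧ ε₀ * ε₁ = 0 ∧ ε₀ + ε₁ = 1 := by
  set R := (ZMod 4)[X] ⧸ Ideal.span {(X ^ 2 + 2 : (ZMod 4)[X]), (2 * X : (ZMod 4)[X])} with hRdef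
  have hZ : (4 : (ZMod 4)[X]) = 0 := CharP.ofNat_eq_zero ((ZMod 4)[X]) 4
  have hR : (4 : R) = 0 := by
    rw [← map_ofNat (Ideal.Quotient.mk (Ideal.span {(X ^ 2 + 2 : (ZMod 4)[X]), (2 * X : (ZMod 4)[X])})) 4,
      hZ, map_zero]
  have h4 : (4 : R[X]) = 0 := by
    rw [← map_ofNat (Polynomial.C : R →+* R[X]) 4, hR, map_zero]
  refine ⟨?_, ?_, ?_, ?_⟩
  · rw [← map_mul, Ideal.Quotient.eq]
    exact (Ideal.mem_span_singleton (α := R[X])).mpr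
      ⟨X + 2, by linear_combination (2 * X ^ 4 + 4 * X ^ 3 + 6 * X ^ 2 + 4 * X + 2) * h4⟩
  · rw [← map_mul, Ideal.Quotient.eq]
    exact (Ideal.mem_span_singleton (α := R[X])).mpr ⟨X + 2, by linear_combination (X ^ 2 + X + 1) * h4⟩
  · rw [← map_mul, Ideal.Quotient.eq_zero_iff_mem]
    exact (Ideal.mem_span_singleton (α := R[X])).mpr
      ⟨3 * X + 2, by linear_combination (X ^ 3 + 3 * X ^ 2 + 3 * X + 2) * h4⟩
  · rw [← map_add, show (3 * X ^ 2 + 3 * X + 3 + (X ^ 2 + X + 2) : R[X]) = 1 by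
      linear_combination (X ^ 2 + X + 1) * h4, map_one]
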